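/- For α ∈ (1,2) and every integer j ≥ 1, the partial sum ∑_{k=0}^j (-1)^k (α choose k) is strictly negative. -/

import Mathlib

open Real Finset

noncomputable def gchoose (α : ℝ) (k : ℕ) : ℝ :=
  (∏ i ∈ Finset.range k, (α - i)) / (Nat.factorial k)

noncomputable def gtilde (α : ℝ) (k : ℕ) : ℝ := (-1) ^ k * gchoose α k

lemma gchoose_pascal (α : ℝ) (j : ℕ) :
    gchoose α (j + 1) = gchoose (α - 1) j + gchoose (α - 1) (j + 1) := by
  unfold gchoose
  have hprod : ∀ n : ℕ, ∏ i ∈ Finset.range (n + 1), (α - i)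
      = α * ∏ i ∈ Finset.range n, (α - 1 - i) := by
    intro n
    rw [Finset.prod_range_succ']
    simp only [Nat.cast_zero, sub_zero]
    rw [mul_comm]
    congr 1
    apply Finset.prod_congr rfl
    intro i _
    push_cast
    ring
  rw [hprod j, Finset.prod_range_succ]
  have hf : (Nat.factorial (j + 1) : ℝ) = (j + 1) * Nat.factorial j := by
    push_cast [Nat.factorial_succ]; ring
  have hfj : (Nat.factorial j : ℝ) ≠ 0 := by positivity
  have hj1 : ((j : ℝ) + 1) ≠ 0 := by positivity
  rw [hf]
  field_simp [hf]
  ring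

lemma sum_gtilde (α : ℝ) (j : ℕ) :
    ∑ k ∈ Finset.range (j + 1), gtilde α k = (-1) ^ j * gchoose (α - 1) j := by
  induction j with
  | zero => simp [gtilde, gchoose]
  | succ n ih =>
    rw [Finset.sum_range_succ, ih, gtilde, gchoose_pascal]
    ring

lemma prod_sign (α : ℝ) (hα : 1 < α ∧ α < 2) (j : ℕ) (hj : 1 ≤ j) :
    (-1) ^ j * ∏ i ∈ Finset.range j, (α - 1 - i) < 0 := by
  induction j with
  | zero => omega
  | succ n ih =>
    rcases Nat.eq_or_lt_of_le hj with h | h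
    · simp only [← h]
      simp only [Finset.prod_range_one, Nat.cast_zero, sub_zero, pow_one]
      nlinarith [hα.1]
    · have hn : 1 ≤ n := by omega
      have := ih hn
      rw [Finset.prod_range_succ]
      have hneg : α - 1 - n < 0 := by
        have : (1 : ℝ) ≤ n := by exact_mod_cast hn
        linarith [hα.2]
      have : (-1 : ℝ) ^ (n + 1) * (∏ i ∈ Finset.range n, (α - 1 - i)) =
          -((-1) ^ n * ∏ i ∈ Finset.range n, (α - 1 - i)) := by ring
      nlinarith [this]

theorem stmt_2 (α : ℝ) (hα : 1 < α ∧ α < 2) (j : ℕ) (hj : 1 ≤ j) :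
    ∑ k ∈ Finset.range (j + 1), gtilde α k < 0 := by
  rw [sum_gtilde]
  unfold gchoose
  have hs := prod_sign α hα j hj
  have hf : (0 : ℝ) < Nat.factorial j := by positivity
  rw [← mul_div_assoc]
  exact div_neg_of_neg_of_pos hs hf
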